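/- arXiv:1306.2622 — 2 statements merged into one kernel-verified Lean document; each statement's English description precedes it below -/
import Mathlib

section
/- Let G, H and K be finite groups and let L ≤ G×H and M ≤ H×K be subgroups. Writing p₂(L) ≤ H for the image of L under the second projection and p₁(M) ≤ H for the image of M under the first projection, and choosing a set T of representatives of the double cosets p₂(L)\H/p₁(M), there is an isomorphism of left (G×K)-sets ((G×H)/L) ×_H ((H×K)/M) ≅ ⨆_{h ∈ T} (G×K)/(L * ((h,1)M(h,1)⁻¹)), where for subgroups A ≤ G×H and B ≤ H×K one sets A * B := {(g,k) ∈ G×K : ∃ h ∈ H with (g,h) ∈ A and (h,k) ∈ B}. -/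
open MulAction

/-- An isomorphism of `M`-sets: an equivariant bijection. -/
def IsoAsGSets (M X Y : Type*) [SMul M X] [SMul M Y] : Prop :=
  ∃ e : X ≃ Y, ∀ (m : M) (x : X), e (m • x) = m • e x

/-- The twisted diagonal subgroup `Δ(R,α,S) = {(α s, s) | s ∈ S}` of `G × H`,
for an isomorphism `α : S ≃* R`. -/
def twistedDiagonal {G H : Type*} [Group G] [Group H] (R : Subgroup G) (S : Subgroup H)
    (α : S ≃* R) : Subgroup (G × H) :=
  ((R.subtype.comp α.toMonoidHom).prod S.subtype).range

/-- `Δ(G,φ,H) = {(φ h, h) | h ∈ H} ≤ G × H` for an isomorphism `φ : H ≃* G`. -/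
def fullTwistedDiagonal {G H : Type*} [Group G] [Group H] (φ : H ≃* G) : Subgroup (G × H) :=
  (φ.toMonoidHom.prod (MonoidHom.id H)).range

/-- The diagonal subgroup `Δ(R) = {(r,r) | r ∈ R} ≤ G × G`. -/
def diagSubgroup {G : Type*} [Group G] (R : Subgroup G) : Subgroup (G × G) :=
  (R.subtype.prod R.subtype).range

/-- A `(G,H)`-biset (i.e. a left `(G × H)`-set) is bifree if it is free as a left `G`-set
and free as a right `H`-set. -/
def IsBifree (G H X : Type*) [Group G] [Group H] [MulAction (G × H) X] : Prop :=
  (∀ (g : G) (x : X), (g, (1 : H)) • x = x → g = 1) ∧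
  (∀ (h : H) (x : X), ((1 : G), h) • x = x → h = 1)

section Tensor

variable (G H K : Type*) [Group G] [Group H] [Group K]
variable (X Y : Type*) [MulAction (G × H) X] [MulAction (H × K) Y]

/-- The relation on `X × Y` identifying `(x·h, y)` with `(x, h·y)`. -/
def bisetSetoid : Setoid (X × Y) where
  r p q := ∃ h : H, q.1 = ((1 : G), h) • p.1 ∧ q.2 = (h, (1 : K)) • p.2
  iseqv := by
    constructor
    · intro p
      exact ⟨1, by simp [Prod.mk_one_one], by simp [Prod.mk_one_one]⟩
    · rintro p q ⟨h, h1, h2⟩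
      exact ⟨h⁻¹, by simp [h1, smul_smul, Prod.mk_one_one], by simp [h2, smul_smul, Prod.mk_one_one]⟩
    · rintro p q r ⟨h, h1, h2⟩ ⟨h', h1', h2'⟩
      exact ⟨h' * h, by simp [h1, h1', smul_smul], by simp [h2, h2', smul_smul]⟩

/-- The tensor product `X ×_H Y` of a `(G,H)`-biset and an `(H,K)`-biset;
a `(G,K)`-biset. -/
def BisetTensor : Type _ :=
  Quotient (bisetSetoid G H K X Y)

variable {G H K X Y}

/-- The class of `(x, y)` in `X ×_H Y`. -/
def BisetTensor.mk (p : X × Y) : BisetTensor G H K X Y :=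
  Quotient.mk (bisetSetoid G H K X Y) p

variable (G H K X Y)

instance : SMul (G × K) (BisetTensor G H K X Y) :=
  ⟨fun a => Quotient.map (fun p => ((a.1, (1 : H)) • p.1, ((1 : H), a.2) • p.2))
    (by
      rintro p q ⟨h, h1, h2⟩
      exact ⟨h, by simp [h1, smul_smul], by simp [h2, smul_smul]⟩)⟩

variable {G H K X Y}

theorem BisetTensor.smul_mk (a : G × K) (p : X × Y) :
    a • (BisetTensor.mk p : BisetTensor G H K X Y) =
      BisetTensor.mk ((a.1, (1 : H)) • p.1, ((1 : H), a.2) • p.2) :=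
  rfl

variable (G H K X Y)

instance : MulAction (G × K) (BisetTensor G H K X Y) where
  one_smul q := Quotient.inductionOn q fun p => by
    refine Quotient.sound ⟨1, ?_, ?_⟩ <;> simp [Prod.mk_one_one]
  mul_smul a b q := Quotient.inductionOn q fun p => by
    refine Quotient.sound ⟨1, ?_, ?_⟩ <;> simp [smul_smul, Prod.mk_one_one]

end Tensor

section Op

/-- The opposite biset: a `(G,H)`-biset viewed as an `(H,G)`-biset via
`h · x · g := g⁻¹ · x · h⁻¹`. -/
def BisetOp (H G X : Type*) : Type _ := (fun _ _ => X) H G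

instance BisetOp.instMulAction {G H : Type*} [Group G] [Group H] (X : Type*)
    [MulAction (G × H) X] : MulAction (H × G) (BisetOp H G X) :=
  MulAction.compHom X (MulEquiv.prodComm : H × G ≃* G × H).toMonoidHom

instance BisetOp.instFinite {G H : Type*} (X : Type*) [Finite X] : Finite (BisetOp H G X) :=
  inferInstanceAs (Finite X)

end Op

section Grp

/-- The group `G` viewed as a `(G,G)`-biset via left and right multiplication. -/
structure BisetGrp (G : Type*) where
  /-- the underlying group element -/
  val : G

instance BisetGrp.instSMul {G : Type*} [Group G] : SMul (G × G) (BisetGrp G) :=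
  ⟨fun p x => ⟨p.1 * x.val * p.2⁻¹⟩⟩

theorem BisetGrp.smul_def {G : Type*} [Group G] (p : G × G) (x : BisetGrp G) :
    p • x = ⟨p.1 * x.val * p.2⁻¹⟩ := rfl

instance BisetGrp.instMulAction {G : Type*} [Group G] : MulAction (G × G) (BisetGrp G) where
  one_smul x := by
    cases x
    simp [BisetGrp.smul_def]
  mul_smul p q x := by
    cases x
    simp [BisetGrp.smul_def, mul_assoc]

instance BisetGrp.instFinite {G : Type*} [Finite G] : Finite (BisetGrp G) :=
  Finite.of_equiv G ⟨fun g => ⟨g⟩, fun x => x.val, fun _ => rfl, fun _ => rfl⟩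

end Grp

/-- A pair `(X,Y)` of `(G,H)`-bisets is an orthogonal pair if
`(X ×_H X°) ⊔ (Y ×_H Y°) ≅ G ⊔ (X ×_H Y°) ⊔ (Y ×_H X°)` as `(G,G)`-bisets;
this encodes the equation `([X] - [Y]) ·_H ([X] - [Y])° = [G]` in `B^Δ(G,G)`. -/
def IsOrthogonalPair (G H : Type*) [Group G] [Group H] (X Y : Type*)
    [MulAction (G × H) X] [MulAction (G × H) Y] : Prop :=
  IsoAsGSets (G × G)
    (BisetTensor G H G X (BisetOp H G X) ⊕ BisetTensor G H G Y (BisetOp H G Y))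
    (BisetGrp G ⊕ (BisetTensor G H G X (BisetOp H G Y) ⊕ BisetTensor G H G Y (BisetOp H G X)))

section Iota

/-- For a `G`-set `Z`, the `(G,G)`-biset `ι(Z) = G × Z` with action
`(g₁,g₂) • (g,z) = (g₁ g g₂⁻¹, g₂ • z)`. -/
structure IotaBiset (G Z : Type*) where
  /-- the group component -/
  fst : G
  /-- the `G`-set component -/
  snd : Z

instance IotaBiset.instSMul {G Z : Type*} [Group G] [MulAction G Z] :
    SMul (G × G) (IotaBiset G Z) :=
  ⟨fun p x => ⟨p.1 * x.fst * p.2⁻¹, p.2 • x.snd⟩⟩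

theorem IotaBiset.smul_def {G Z : Type*} [Group G] [MulAction G Z] (p : G × G)
    (x : IotaBiset G Z) : p • x = ⟨p.1 * x.fst * p.2⁻¹, p.2 • x.snd⟩ := rfl

instance IotaBiset.instMulAction {G Z : Type*} [Group G] [MulAction G Z] :
    MulAction (G × G) (IotaBiset G Z) where
  one_smul x := by
    cases x
    simp [IotaBiset.smul_def]
  mul_smul p q x := by
    cases x
    simp [IotaBiset.smul_def, mul_assoc, mul_smul]

instance IotaBiset.instFinite {G Z : Type*} [Finite G] [Finite Z] : Finite (IotaBiset G Z) :=
  Finite.of_equiv (G × Z) ⟨fun p => ⟨p.1, p.2⟩, fun x => (x.fst, x.snd), fun _ => rfl,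
    fun _ => rfl⟩

end Iota

/-- The composition (as relations) `L * M ≤ G × K` of `L ≤ G × H` and `M ≤ H × K`. -/
def starComp {G H K : Type*} [Group G] [Group H] [Group K] (L : Subgroup (G × H))
    (M : Subgroup (H × K)) : Subgroup (G × K) where
  carrier := {p | ∃ h : H, (p.1, h) ∈ L ∧ (h, p.2) ∈ M}
  one_mem' := ⟨1, L.one_mem, M.one_mem⟩
  mul_mem' := by
    rintro a b ⟨h, h1, h2⟩ ⟨h', h1', h2'⟩
    exact ⟨h * h', L.mul_mem h1 h1', M.mul_mem h2 h2'⟩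
  inv_mem' := by
    rintro a ⟨h, h1, h2⟩
    exact ⟨h⁻¹, L.inv_mem h1, M.inv_mem h2⟩

/-- the Mackey-type decomposition formula for the tensor product of two
transitive bisets `(G×H)/L` and `(H×K)/M`, indexed by a set `T` of representatives of the
double cosets `p₂(L)\H/p₁(M)`. -/
theorem statement3 {G H K : Type*} [Group G] [Group H] [Group K] [Finite G] [Finite H]
    [Finite K] (L : Subgroup (G × H)) (M : Subgroup (H × K)) (T : Finset H)
    (hT : ∀ h : H, ∃! t, t ∈ T ∧ ∃ x ∈ Subgroup.map (MonoidHom.snd G H) L,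
        ∃ y ∈ Subgroup.map (MonoidHom.fst H K) M, h = x * t * y) :
    IsoAsGSets (G × K)
      (BisetTensor G H K ((G × H) ⧸ L) ((H × K) ⧸ M))
      (Σ t : T, ((G × K) ⧸ starComp L
        (Subgroup.map (MulAut.conj ((t : H), (1 : K))).toMonoidHom M))) := by
  classical
  let N : T → Subgroup (G × K) := fun t =>
    starComp L (Subgroup.map (MulAut.conj ((t : H), (1 : K))).toMonoidHom M)
  have hmem : ∀ (t : T) (p : G × K),
      p ∈ N t ↔ ∃ h : H, (p.1, h) ∈ L ∧ ((t : H)⁻¹ * h * (t : H), p.2) ∈ M := by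
    intro t p
    have e : ∀ h : H, (MulAut.conj ((t : H), (1 : K))).symm (h, p.2)
        = ((t : H)⁻¹ * h * (t : H), p.2) := by
      intro h
      simp [MulAut.conj_symm_apply, Prod.ext_iff]
    constructor
    · rintro ⟨h, h1, h2⟩
      rw [Subgroup.mem_map_equiv, e] at h2
      exact ⟨h, h1, h2⟩
    · rintro ⟨h, h1, h2⟩
      refine ⟨h, h1, ?_⟩
      rw [Subgroup.mem_map_equiv, e]
      exact h2
  let f : ∀ _ : T, (G × K) → BisetTensor G H K ((G × H) ⧸ L) ((H × K) ⧸ M) := fun t p =>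
    BisetTensor.mk ((↑(p.1, (1 : H)) : (G × H) ⧸ L), (↑((t : H), p.2) : (H × K) ⧸ M))
  have key : ∀ (t : T) (p q : G × K), p⁻¹ * q ∈ N t → f t p = f t q := by
    rintro t ⟨p1, p2⟩ ⟨q1, q2⟩ hpq
    rw [hmem] at hpq
    obtain ⟨h, hL, hM⟩ := hpq
    simp only [Prod.fst_mul, Prod.fst_inv, Prod.snd_mul, Prod.snd_inv] at hL hM
    refine Quotient.sound ⟨h⁻¹, ?_, ?_⟩
    · show (↑(q1, (1 : H)) : (G × H) ⧸ L) = ↑(((1 : G), h⁻¹) * (p1, (1 : H)))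
      rw [QuotientGroup.eq]
      have := L.inv_mem hL
      simp only [Prod.inv_mk, Prod.mk_mul_mk, mul_inv_rev, inv_inv] at this ⊢
      simpa using this
    · show (↑((t : H), q2) : (H × K) ⧸ M) = ↑((h⁻¹, (1 : K)) * ((t : H), p2))
      rw [QuotientGroup.eq]
      have := M.inv_mem hM
      simp only [Prod.inv_mk, Prod.mk_mul_mk, mul_inv_rev, inv_inv] at this ⊢
      simpa [mul_assoc] using this
  let Phi : (Σ t : T, (G × K) ⧸ N t) → BisetTensor G H K ((G × H) ⧸ L) ((H × K) ⧸ M) :=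
    fun s => Quotient.liftOn' s.2 (f s.1) fun a b hab =>
      key s.1 a b (QuotientGroup.leftRel_apply.mp hab)
  have hequiv : ∀ (a : G × K) (s : Σ t : T, (G × K) ⧸ N t), Phi (a • s) = a • Phi s := by
    rintro a ⟨t, q⟩
    obtain ⟨p, rfl⟩ := QuotientGroup.mk_surjective q
    show f t (a * p) = a • f t p
    rw [BisetTensor.smul_mk]
    refine Quotient.sound ⟨1, ?_, ?_⟩
    · show (↑((a.1, (1 : H)) * (p.1, (1 : H))) : (G × H) ⧸ L)
        = ↑(((1 : G), (1 : H)) * ((a * p).1, (1 : H)))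
      rw [QuotientGroup.eq]
      simp only [Prod.inv_mk, Prod.mk_mul_mk, Prod.fst_mul, mul_inv_rev]
      simpa [mul_assoc, Prod.mk_one_one] using L.one_mem
    · show (↑(((1 : H), a.2) * ((t : H), p.2)) : (H × K) ⧸ M)
        = ↑(((1 : H), (1 : K)) * ((t : H), (a * p).2))
      rw [QuotientGroup.eq]
      simp only [Prod.inv_mk, Prod.mk_mul_mk, Prod.snd_mul, mul_inv_rev]
      simpa [mul_assoc, Prod.mk_one_one] using M.one_mem
  have hinj : Function.Injective Phi := by
    rintro ⟨t, q⟩ ⟨t', q'⟩ hPhi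
    obtain ⟨p, rfl⟩ := QuotientGroup.mk_surjective q
    obtain ⟨p', rfl⟩ := QuotientGroup.mk_surjective q'
    obtain ⟨η, e1, e2⟩ := Quotient.exact hPhi
    rw [show ((1 : G), η) • (↑(p.1, (1 : H)) : (G × H) ⧸ L)
        = ↑(((1 : G), η) * (p.1, (1 : H))) from rfl, QuotientGroup.eq] at e1
    rw [show (η, (1 : K)) • (↑((t : H), p.2) : (H × K) ⧸ M)
        = ↑((η, (1 : K)) * ((t : H), p.2)) from rfl, QuotientGroup.eq] at e2
    simp only [Prod.inv_mk, Prod.mk_mul_mk, one_mul, mul_one, inv_one] at e1 e2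
    -- e1 : (p'.1⁻¹ * p.1, η) ∈ L ; e2 : ((t':H)⁻¹ * (η * t), p'.2⁻¹ * p.2) ∈ M
    have hηL : η ∈ Subgroup.map (MonoidHom.snd G H) L := ⟨_, e1, rfl⟩
    have hyM : ((t' : H)⁻¹ * (η * (t : H)))⁻¹ ∈ Subgroup.map (MonoidHom.fst H K) M :=
      Subgroup.inv_mem _ ⟨_, e2, rfl⟩
    have htt : (t : H) = (t' : H) := by
      have h1 : (t' : H) ∈ T ∧ ∃ x ∈ Subgroup.map (MonoidHom.snd G H) L,
          ∃ y ∈ Subgroup.map (MonoidHom.fst H K) M, (t' : H) = x * (t' : H) * y :=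
        ⟨t'.2, 1, Subgroup.one_mem _, 1, Subgroup.one_mem _, by simp⟩
      have h2 : (t : H) ∈ T ∧ ∃ x ∈ Subgroup.map (MonoidHom.snd G H) L,
          ∃ y ∈ Subgroup.map (MonoidHom.fst H K) M, (t' : H) = x * (t : H) * y :=
        ⟨t.2, η, hηL, ((t' : H)⁻¹ * (η * (t : H)))⁻¹, hyM, by group⟩
      exact (hT (t' : H)).unique h2 h1
    have htt' : t = t' := Subtype.ext htt
    subst htt'
    have hq : (↑p : (G × K) ⧸ N t) = ↑p' := by
      rw [QuotientGroup.eq, hmem]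
      refine ⟨η⁻¹, ?_, ?_⟩
      · have := L.inv_mem e1
        simp only [Prod.inv_mk, mul_inv_rev, inv_inv] at this
        simpa using this
      · have := M.inv_mem e2
        simp only [Prod.inv_mk, mul_inv_rev, inv_inv] at this
        simp only [Prod.fst_mul, Prod.fst_inv, Prod.snd_mul, Prod.snd_inv]
        convert this using 2
    exact congrArg (Sigma.mk t) hq
  have hsurj : Function.Surjective Phi := by
    intro z
    induction z using Quotient.inductionOn with
    | _ w =>
      obtain ⟨x, y⟩ := w
      obtain ⟨⟨g, h⟩, rfl⟩ := QuotientGroup.mk_surjective x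
      obtain ⟨⟨h', k⟩, rfl⟩ := QuotientGroup.mk_surjective y
      obtain ⟨t, ⟨htT, x', hx', y', hy', heq⟩, -⟩ := hT (h⁻¹ * h')
      rw [Subgroup.mem_map] at hx' hy'
      obtain ⟨u, huL, rfl⟩ := hx'
      obtain ⟨v, hvM, rfl⟩ := hy'
      simp only [MonoidHom.coe_fst, MonoidHom.coe_snd] at heq
      refine ⟨⟨⟨t, htT⟩, ↑(g * u.1, k * v.2⁻¹)⟩, ?_⟩
      show f ⟨t, htT⟩ (g * u.1, k * v.2⁻¹) = Quotient.mk _ ((↑(g, h) : (G × H) ⧸ L), (↑(h', k) : (H × K) ⧸ M))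
      refine Quotient.sound ⟨h * u.2, ?_, ?_⟩
      · show (↑(g, h) : (G × H) ⧸ L) = ↑(((1 : G), h * u.2) * (g * u.1, (1 : H)))
        rw [QuotientGroup.eq]
        have : ((g, h) : G × H)⁻¹ * (((1 : G), h * u.2) * (g * u.1, (1 : H))) = (u.1, u.2) := by
          simp only [Prod.inv_mk, Prod.mk_mul_mk, Prod.ext_iff]
          constructor <;> group
        rw [this, Prod.mk.eta]
        exact huL
      · show (↑(h', k) : (H × K) ⧸ M) = ↑((h * u.2, (1 : K)) * (t, k * v.2⁻¹))
        rw [QuotientGroup.eq]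
        have hv1 : v.1 = t⁻¹ * (u.2⁻¹ * (h⁻¹ * h')) := by
          rw [heq]; group
        have : ((h', k) : H × K)⁻¹ * ((h * u.2, (1 : K)) * (t, k * v.2⁻¹)) = v⁻¹ := by
          rw [Prod.ext_iff]
          simp only [Prod.inv_mk, Prod.mk_mul_mk, Prod.fst_inv, Prod.snd_inv, Prod.fst_mul,
            Prod.snd_mul]
          constructor
          · rw [hv1]; group
          · group
        rw [this]
        exact M.inv_mem hvM
  let E := Equiv.ofBijective Phi ⟨hinj, hsurj⟩
  refine ⟨E.symm, fun m x => ?_⟩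
  apply E.injective
  rw [Equiv.apply_symm_apply]
  rw [show E (m • E.symm x) = Phi (m • E.symm x) from rfl, hequiv]
  rw [show Phi (E.symm x) = E (E.symm x) from rfl, Equiv.apply_symm_apply]
end

section
/- Let G, H and K be finite groups, let R ≤ G and T ≤ K be subgroups, and let ρ : T → R be a group isomorphism. Let Γ_H(R,ρ,T) be the set of triples (σ,S,τ) with S ≤ H a subgroup and σ : S → R, τ : T → S group isomorphisms such that ρ = σ∘τ; H acts on Γ_H(R,ρ,T) by h·(σ,S,τ) = (σ∘c_{h⁻¹}, hSh⁻¹, c_h∘τ), and let Γ̃_H(R,ρ,T) be a set of representatives of the H-orbits. Then for any finite bifree (G,H)-biset X and any finite bifree (H,K)-biset Y one has the equality of rational numbers |(X ×_H Y)^{Δ(R,ρ,T)}| = Σ_{(σ,S,τ) ∈ Γ̃_H(R,ρ,T)} |C_H(S)|⁻¹ · |X^{Δ(R,σ,S)}| · |Y^{Δ(S,τ,T)}|. -/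
open MulAction

/-- A triple `(σ, S, τ)` with `S ≤ H` and isomorphisms `σ : S ≃* R`, `τ : T ≃* S`
such that `ρ = σ ∘ τ`; an element of the set `Γ_H(R,ρ,T)`. -/
structure TripleGamma {G K : Type*} [Group G] [Group K] (H : Type*) [Group H]
    (R : Subgroup G) (T : Subgroup K) (ρ : T ≃* R) where
  /-- the middle subgroup -/
  S : Subgroup H
  /-- the isomorphism `σ : S ≃* R` -/
  σ : S ≃* R
  /-- the isomorphism `τ : T ≃* S` -/
  τ : T ≃* S
  comp : ∀ t : T, σ (τ t) = ρ t

/-- Two triples lie in the same `H`-orbit (under `h·(σ,S,τ) = (σ∘c_{h⁻¹}, hSh⁻¹, c_h∘τ)`)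
if and only if they are related as follows. -/
def TripleGamma.HConj {G K : Type*} [Group G] [Group K] {H : Type*} [Group H]
    {R : Subgroup G} {T : Subgroup K} {ρ : T ≃* R}
    (t₁ t₂ : TripleGamma H R T ρ) : Prop :=
  ∃ h : H, t₂.S = Subgroup.map (MulAut.conj h).toMonoidHom t₁.S ∧
    ∀ k : T, (t₂.τ k : H) = h * (t₁.τ k : H) * h⁻¹

namespace S5

open MulAction

variable {G H K : Type*} [Group G] [Group H] [Group K]

lemma mem_twisted_iff {R : Subgroup G} {S : Subgroup H} (α : S ≃* R) (p : G × H) :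
    p ∈ twistedDiagonal R S α ↔ ∃ s : S, (((α s : G), (s : H)) : G × H) = p := by
  rfl

lemma mem_fixed_iff {X : Type*} [MulAction (G × H) X] {R : Subgroup G} {S : Subgroup H}
    (α : S ≃* R) (x : X) :
    x ∈ fixedPoints (twistedDiagonal R S α) X ↔
      ∀ s : S, (((α s : G), (s : H)) : G × H) • x = x := by
  constructor
  · intro hx s
    exact hx ⟨_, (mem_twisted_iff α _).2 ⟨s, rfl⟩⟩
  · rintro h ⟨p, hp⟩
    obtain ⟨s, rfl⟩ := (mem_twisted_iff α p).1 hp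
    exact h s

variable {R : Subgroup G} {T : Subgroup K} {ρ : T ≃* R}

lemma mem_S_iff (t : TripleGamma H R T ρ) (s : H) :
    s ∈ t.S ↔ ∃ k : T, (t.τ k : H) = s := by
  constructor
  · intro hs
    exact ⟨t.τ.symm ⟨s, hs⟩, by simp⟩
  · rintro ⟨k, rfl⟩; exact (t.τ k).2

lemma ext' {t₁ t₂ : TripleGamma H R T ρ}
    (hτ : ∀ k : T, (t₁.τ k : H) = (t₂.τ k : H)) : t₁ = t₂ := by
  have hS : t₁.S = t₂.S := by
    ext s
    rw [mem_S_iff t₁, mem_S_iff t₂]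
    constructor <;> rintro ⟨k, rfl⟩ <;> exact ⟨k, by rw [hτ]⟩
  obtain ⟨S₁, σ₁, τ₁, c₁⟩ := t₁
  obtain ⟨S₂, σ₂, τ₂, c₂⟩ := t₂
  dsimp at hS hτ
  subst hS
  have hττ : τ₁ = τ₂ := MulEquiv.ext fun k => Subtype.ext (hτ k)
  subst hττ
  have hσσ : σ₁ = σ₂ := MulEquiv.ext fun s => by
    obtain ⟨k, rfl⟩ := τ₁.surjective s
    rw [c₁, c₂]
  subst hσσ
  rfl

/-- The `H`-conjugation action on triples. -/
def conjTriple (h : H) (t : TripleGamma H R T ρ) : TripleGamma H R T ρ where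
  S := t.S.map ((MulAut.conj h : H ≃* H) : H →* H)
  σ := ((MulAut.conj h : H ≃* H).subgroupMap t.S).symm.trans t.σ
  τ := t.τ.trans ((MulAut.conj h : H ≃* H).subgroupMap t.S)
  comp k := by simp [t.comp]

instance : SMul H (TripleGamma H R T ρ) := ⟨conjTriple⟩

lemma smul_τ_coe (h : H) (t : TripleGamma H R T ρ) (k : T) :
    ((h • t).τ k : H) = h * (t.τ k : H) * h⁻¹ := by
  show ((conjTriple h t).τ k : H) = _
  rfl

instance : MulAction H (TripleGamma H R T ρ) where
  one_smul t := ext' fun k => by simp [smul_τ_coe]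
  mul_smul a b t := ext' fun k => by
    simp only [smul_τ_coe]
    group

end S5
namespace S5

open MulAction

variable {G H K : Type*} [Group G] [Group H] [Group K]
variable {R : Subgroup G} {T : Subgroup K} {ρ : T ≃* R}

lemma stabilizer_eq_centralizer (t : TripleGamma H R T ρ) :
    stabilizer H t = Subgroup.centralizer (t.S : Set H) := by
  ext h
  rw [mem_stabilizer_iff, Subgroup.mem_centralizer_iff]
  constructor
  · intro hh s hs
    obtain ⟨k, rfl⟩ := (mem_S_iff t s).1 hs
    have := congrArg (fun t' : TripleGamma H R T ρ => ((TripleGamma.τ t') k : H)) hh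
    simp only [smul_τ_coe] at this
    calc (t.τ k : H) * h = h * (t.τ k : H) * h⁻¹ * h := by rw [this]
    _ = h * (t.τ k : H) := by group
  · intro hh
    apply ext'
    intro k
    rw [smul_τ_coe]
    have := hh (t.τ k) ((mem_S_iff t _).2 ⟨k, rfl⟩)
    calc h * (t.τ k : H) * h⁻¹ = (t.τ k : H) * h * h⁻¹ := by rw [← this]
    _ = (t.τ k : H) := by group

lemma hconj_iff (t t' : TripleGamma H R T ρ) :
    TripleGamma.HConj t t' ↔ t ∈ orbit H t' := by
  constructor
  · rintro ⟨h, _, hτ⟩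
    have ht' : t' = h • t := (ext' fun k => by rw [hτ, smul_τ_coe]).symm
    refine mem_orbit_iff.2 ⟨h⁻¹, ?_⟩
    rw [ht', inv_smul_smul]
  · intro ht
    obtain ⟨h, rfl⟩ := mem_orbit_iff.1 ht
    refine ⟨h⁻¹, ?_, fun k => by rw [smul_τ_coe]; group⟩
    ext s
    rw [Subgroup.mem_map]
    constructor
    · intro hs
      obtain ⟨k, rfl⟩ := (mem_S_iff t' s).1 hs
      refine ⟨((h • t').τ k : H), (mem_S_iff (h • t') _).2 ⟨k, rfl⟩, ?_⟩
      rw [smul_τ_coe]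
      simp only [MulEquiv.coe_toMonoidHom, MulAut.conj_apply]
      group
    · rintro ⟨u, hu, rfl⟩
      obtain ⟨k, rfl⟩ := (mem_S_iff (h • t') u).1 hu
      refine (mem_S_iff t' _).2 ⟨k, ?_⟩
      rw [smul_τ_coe]
      simp only [MulEquiv.coe_toMonoidHom, MulAut.conj_apply]
      group

lemma finite_tripleGamma [Finite H] [Finite K] : Finite (TripleGamma H R T ρ) := by
  apply Finite.of_injective (fun t : TripleGamma H R T ρ => (fun k => (t.τ k : H) : T → H))
  intro t₁ t₂ he
  exact ext' fun k => congrFun he k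

end S5
namespace S5

open MulAction

variable {G H K : Type*} [Group G] [Group H] [Group K]
variable {R : Subgroup G} {T : Subgroup K} {ρ : T ≃* R}
variable {X Y : Type*} [MulAction (G × H) X] [MulAction (H × K) Y]

lemma left_cancel (hY : IsBifree H K Y) {y : Y} {k : K} {h h' : H}
    (e1 : ((h, k) : H × K) • y = y) (e2 : ((h', k) : H × K) • y = y) : h = h' := by
  have key : ((h'⁻¹ * h, (1 : K)) : H × K) • y = y := by
    have hp : ((h'⁻¹ * h, (1 : K)) : H × K) = ((h', k) : H × K)⁻¹ * (h, k) := by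
      simp [Prod.ext_iff]
    rw [hp, mul_smul, e1]
    conv_lhs => rw [← e2]
    rw [inv_smul_smul]
  have := hY.1 _ _ key
  rwa [inv_mul_eq_one, eq_comm] at this

lemma right_cancel (hX : IsBifree G H X) {x : X} {g : G} {h h' : H}
    (e1 : ((g, h) : G × H) • x = x) (e2 : ((g, h') : G × H) • x = x) : h = h' := by
  have key : (((1 : G), h'⁻¹ * h) : G × H) • x = x := by
    have hp : (((1 : G), h'⁻¹ * h) : G × H) = ((g, h') : G × H)⁻¹ * (g, h) := by
      simp [Prod.ext_iff]
    rw [hp, mul_smul, e1]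
    conv_lhs => rw [← e2]
    rw [inv_smul_smul]
  have := hX.2 _ _ key
  rwa [inv_mul_eq_one, eq_comm] at this

lemma mk_eq_mk_iff {p q : X × Y} :
    (BisetTensor.mk p : BisetTensor G H K X Y) = BisetTensor.mk q ↔
      ∃ h : H, q.1 = (((1 : G), h) : G × H) • p.1 ∧ q.2 = ((h, (1 : K)) : H × K) • p.2 := by
  constructor
  · exact fun e => Quotient.exact e
  · exact fun h => Quotient.sound (s := bisetSetoid G H K X Y) h

lemma exists_rep (z : BisetTensor G H K X Y) : ∃ p : X × Y, BisetTensor.mk p = z :=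
  Quotient.exists_rep z

lemma mk_mem_fixed_iff (x : X) (y : Y) :
    (BisetTensor.mk (x, y) : BisetTensor G H K X Y) ∈
        fixedPoints (twistedDiagonal R T ρ) (BisetTensor G H K X Y) ↔
      ∀ k : T, ∃ h : H, (((ρ k : G), h) : G × H) • x = x ∧
        ((h, (k : K)) : H × K) • y = y := by
  rw [mem_fixed_iff]
  refine forall_congr' fun k => ?_
  rw [BisetTensor.smul_mk, mk_eq_mk_iff]
  dsimp only
  constructor
  · rintro ⟨h, h1, h2⟩
    rw [smul_smul] at h1 h2
    rw [show (((1 : G), h) : G × H) * ((ρ k : G), 1) = ((ρ k : G), h) by simp] at h1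
    rw [show ((h, (1 : K)) : H × K) * (1, (k : K)) = (h, (k : K)) by simp] at h2
    exact ⟨h, h1.symm, h2.symm⟩
  · rintro ⟨h, h1, h2⟩
    refine ⟨h, ?_, ?_⟩
    · rw [smul_smul, show (((1 : G), h) : G × H) * ((ρ k : G), 1) = ((ρ k : G), h) by simp, h1]
    · rw [smul_smul, show ((h, (1 : K)) : H × K) * (1, (k : K)) = (h, (k : K)) by simp, h2]

/-- Fixed points of `Δ(R,σ,S)` on `X`. -/
def fX (X : Type*) [MulAction (G × H) X] (t : TripleGamma H R T ρ) : Set X :=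
  fixedPoints (twistedDiagonal R t.S t.σ) X

/-- Fixed points of `Δ(S,τ,T)` on `Y`. -/
def fY (Y : Type*) [MulAction (H × K) Y] (t : TripleGamma H R T ρ) : Set Y :=
  fixedPoints (twistedDiagonal t.S T t.τ) Y

lemma mem_fX_iff {x : X} {t : TripleGamma H R T ρ} :
    x ∈ fX X t ↔ ∀ k : T, (((ρ k : G), (t.τ k : H)) : G × H) • x = x := by
  rw [fX, mem_fixed_iff]
  constructor
  · intro hx k
    have := hx (t.τ k)
    rwa [t.comp] at this
  · intro hx s
    obtain ⟨k, rfl⟩ := t.τ.surjective s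
    rw [t.comp]
    exact hx k

lemma mem_fY_iff {y : Y} {t : TripleGamma H R T ρ} :
    y ∈ fY Y t ↔ ∀ k : T, (((t.τ k : H), (k : K)) : H × K) • y = y := by
  rw [fY, mem_fixed_iff]

lemma mem_fX_smul {x : X} {t : TripleGamma H R T ρ} (hx : x ∈ fX X t) (h : H) :
    (((1 : G), h) : G × H) • x ∈ fX X (h • t) := by
  rw [mem_fX_iff] at hx ⊢
  intro k
  rw [smul_τ_coe, smul_smul,
    show (((ρ k : G), h * (t.τ k : H) * h⁻¹) : G × H) * ((1 : G), h)
      = (((1 : G), h) : G × H) * ((ρ k : G), (t.τ k : H)) by simp [Prod.ext_iff],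
    mul_smul, hx k]

lemma mem_fY_smul {y : Y} {t : TripleGamma H R T ρ} (hy : y ∈ fY Y t) (h : H) :
    ((h, (1 : K)) : H × K) • y ∈ fY Y (h • t) := by
  rw [mem_fY_iff] at hy ⊢
  intro k
  rw [smul_τ_coe, smul_smul,
    show ((h * (t.τ k : H) * h⁻¹, (k : K)) : H × K) * (h, (1 : K))
      = ((h, (1 : K)) : H × K) * ((t.τ k : H), (k : K)) by simp [Prod.ext_iff],
    mul_smul, hy k]

lemma card_fX_smul (t : TripleGamma H R T ρ) (h : H) :
    Nat.card (fX X (h • t)) = Nat.card (fX X t) := by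
  refine (Nat.card_eq_of_bijective
    (fun x : fX X t => (⟨(((1 : G), h) : G × H) • (x : X), mem_fX_smul x.2 h⟩ : fX X (h • t)))
    ⟨fun a b hab => Subtype.ext (MulAction.injective _ (Subtype.ext_iff.1 hab)), ?_⟩).symm
  rintro ⟨x', hx'⟩
  have hmem : (((1 : G), h⁻¹) : G × H) • x' ∈ fX X t := by
    have := mem_fX_smul hx' h⁻¹
    rwa [inv_smul_smul] at this
  refine ⟨⟨_, hmem⟩, Subtype.ext ?_⟩
  show (((1 : G), h) : G × H) • (((1 : G), h⁻¹) : G × H) • x' = x'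
  rw [smul_smul]
  simp [Prod.mk_one_one]

lemma card_fY_smul (t : TripleGamma H R T ρ) (h : H) :
    Nat.card (fY Y (h • t)) = Nat.card (fY Y t) := by
  refine (Nat.card_eq_of_bijective
    (fun y : fY Y t => (⟨((h, (1 : K)) : H × K) • (y : Y), mem_fY_smul y.2 h⟩ : fY Y (h • t)))
    ⟨fun a b hab => Subtype.ext (MulAction.injective _ (Subtype.ext_iff.1 hab)), ?_⟩).symm
  rintro ⟨y', hy'⟩
  have hmem : ((h⁻¹, (1 : K)) : H × K) • y' ∈ fY Y t := by
    have := mem_fY_smul hy' h⁻¹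
    rwa [inv_smul_smul] at this
  refine ⟨⟨_, hmem⟩, Subtype.ext ?_⟩
  show ((h, (1 : K)) : H × K) • ((h⁻¹, (1 : K)) : H × K) • y' = y'
  rw [smul_smul]
  simp [Prod.mk_one_one]

end S5
namespace S5

open MulAction

variable {G H K : Type*} [Group G] [Group H] [Group K]
variable {R : Subgroup G} {T : Subgroup K} {ρ : T ≃* R}
variable {X Y : Type*} [MulAction (G × H) X] [MulAction (H × K) Y]

/-- The set of triples `(t, x, y)` with `x ∈ X^{Δ(R,σ,S)}` and `y ∈ Y^{Δ(S,τ,T)}`. -/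
def PP {G K : Type*} (H : Type*) [Group G] [Group H] [Group K] {R : Subgroup G}
    {T : Subgroup K} (ρ : T ≃* R) (X Y : Type*) [MulAction (G × H) X]
    [MulAction (H × K) Y] : Type _ :=
  {p : TripleGamma H R T ρ × X × Y // p.2.1 ∈ fX X p.1 ∧ p.2.2 ∈ fY Y p.1}

/-- Translation of `PP` by an element of `H`. -/
def translate (h : H) (p : PP H ρ X Y) : PP H ρ X Y :=
  ⟨(h • p.1.1, (((1 : G), h) : G × H) • p.1.2.1, ((h, (1 : K)) : H × K) • p.1.2.2),
   mem_fX_smul p.2.1 h, mem_fY_smul p.2.2 h⟩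

/-- The natural map from `PP` to the tensor product. -/
def piMap (p : PP H ρ X Y) : BisetTensor G H K X Y :=
  BisetTensor.mk (p.1.2.1, p.1.2.2)

lemma piMap_mem_fixed (p : PP H ρ X Y) :
    piMap p ∈ fixedPoints (twistedDiagonal R T ρ) (BisetTensor G H K X Y) := by
  rw [piMap, mk_mem_fixed_iff]
  intro k
  exact ⟨(p.1.1.τ k : H), mem_fX_iff.1 p.2.1 k, mem_fY_iff.1 p.2.2 k⟩

lemma piMap_translate (h : H) (p : PP H ρ X Y) : piMap (translate h p) = piMap p :=
  (Quotient.sound (s := bisetSetoid G H K X Y) ⟨h, rfl, rfl⟩).symm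

lemma exists_pp (_hX : IsBifree G H X) (hY : IsBifree H K Y) {z : BisetTensor G H K X Y}
    (hz : z ∈ fixedPoints (twistedDiagonal R T ρ) (BisetTensor G H K X Y)) :
    ∃ p : PP H ρ X Y, piMap p = z := by
  obtain ⟨⟨x, y⟩, rfl⟩ := exists_rep z
  rw [mk_mem_fixed_iff] at hz
  choose f hf1 hf2 using hz
  have hmul : ∀ k k' : T, f (k * k') = f k * f k' := by
    intro k k'
    refine left_cancel hY (hf2 (k * k')) ?_
    have hp : ((f k * f k', ((k * k' : T) : K)) : H × K)
        = ((f k, (k : K)) : H × K) * (f k', (k' : K)) := by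
      simp [Prod.ext_iff]
    rw [hp, mul_smul, hf2 k', hf2 k]
  set φ : T →* H := MonoidHom.mk' f hmul with hφ
  have hinj : Function.Injective φ := by
    rw [injective_iff_map_eq_one]
    intro k hk
    have h2 := hf2 k
    rw [show f k = φ k from rfl, hk] at h2
    have := hY.2 _ _ h2
    exact Subtype.ext this
  set τ : T ≃* φ.range := MonoidHom.ofInjective hinj with hτ
  have hcoe : ∀ k : T, (τ k : H) = f k := fun k => MonoidHom.ofInjective_apply hinj
  refine ⟨⟨(⟨φ.range, τ.symm.trans ρ, τ, fun k => by simp⟩, x, y), ?_, ?_⟩, rfl⟩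
  · rw [mem_fX_iff]
    intro k
    dsimp only
    rw [hcoe k]
    exact hf1 k
  · rw [mem_fY_iff]
    intro k
    dsimp only
    rw [hcoe k]
    exact hf2 k

lemma card_pp (hX : IsBifree G H X) (hY : IsBifree H K Y) :
    Nat.card (PP H ρ X Y) =
      Nat.card (fixedPoints (twistedDiagonal R T ρ) (BisetTensor G H K X Y)) * Nat.card H := by
  classical
  have hsec : ∀ z : fixedPoints (twistedDiagonal R T ρ) (BisetTensor G H K X Y),
      ∃ p : PP H ρ X Y, piMap p = (z : BisetTensor G H K X Y) :=
    fun z => exists_pp hX hY z.2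
  choose sec hsecp using hsec
  rw [← Nat.card_prod]
  refine (Nat.card_eq_of_bijective
      (fun q : (fixedPoints (twistedDiagonal R T ρ) (BisetTensor G H K X Y)) × H =>
        translate q.2 (sec q.1)) ⟨?_, ?_⟩).symm
  · rintro ⟨z, h⟩ ⟨z', h'⟩ e
    dsimp only at e
    have hz : z = z' := by
      have := congrArg piMap e
      rw [piMap_translate, piMap_translate, hsecp, hsecp] at this
      exact Subtype.ext this
    subst hz
    have e1 : (((1 : G), h) : G × H) • (sec z).1.2.1 = (((1 : G), h') : G × H) • (sec z).1.2.1 :=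
      congrArg (fun p : PP H ρ X Y => p.1.2.1) e
    have e2 : (((1 : G), h'⁻¹ * h) : G × H) • (sec z).1.2.1 = (sec z).1.2.1 := by
      rw [show (((1 : G), h'⁻¹ * h) : G × H) = (((1 : G), h') : G × H)⁻¹ * ((1 : G), h) by
        simp [Prod.ext_iff], mul_smul, e1, inv_smul_smul]
    have := hX.2 _ _ e2
    rw [inv_mul_eq_one] at this
    rw [this]
  · intro p
    set z : fixedPoints (twistedDiagonal R T ρ) (BisetTensor G H K X Y) :=
      ⟨piMap p, piMap_mem_fixed p⟩ with hzdef
    have hq : (BisetTensor.mk ((sec z).1.2.1, (sec z).1.2.2) : BisetTensor G H K X Y)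
        = BisetTensor.mk (p.1.2.1, p.1.2.2) := hsecp z
    obtain ⟨h, e1, e2⟩ := mk_eq_mk_iff.1 hq
    dsimp only at e1 e2
    refine ⟨(z, h), ?_⟩
    apply Subtype.ext
    have ht : h • (sec z).1.1 = p.1.1 := by
      apply ext'
      intro k
      rw [smul_τ_coe]
      have ha : ((h⁻¹ * (p.1.1.τ k : H) * h, (k : K)) : H × K) • (sec z).1.2.2
          = (sec z).1.2.2 := by
        have hp : ((h⁻¹ * (p.1.1.τ k : H) * h, (k : K)) : H × K)
            = ((h⁻¹, (1 : K)) : H × K) * (((p.1.1.τ k : H), (k : K)) : H × K) * (h, 1) := by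
          simp [Prod.ext_iff]
        rw [hp, mul_smul, mul_smul, ← e2, mem_fY_iff.1 p.2.2 k, e2, ← mul_smul]
        simp [Prod.mk_one_one]
      have hc := left_cancel hY ha (mem_fY_iff.1 (sec z).2.2 k)
      rw [← hc]
      group
    exact Prod.ext ht (Prod.ext e1.symm e2.symm)

end S5
/-- the fixed-point (mark) formula for the tensor product of bifree bisets:
`|(X ×_H Y)^{Δ(R,ρ,T)}| = Σ_{(σ,S,τ) ∈ Γ̃_H(R,ρ,T)} |C_H(S)|⁻¹·|X^{Δ(R,σ,S)}|·|Y^{Δ(S,τ,T)}|`,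
where `Γ̃_H(R,ρ,T)` is a set of representatives of the `H`-orbits of `Γ_H(R,ρ,T)`. -/
theorem statement5 {G H K : Type*} [Group G] [Group H] [Group K] [Finite G] [Finite H]
    [Finite K] (R : Subgroup G) (T : Subgroup K) (ρ : T ≃* R)
    (Γt : Set (TripleGamma H R T ρ))
    (hΓ : ∀ t : TripleGamma H R T ρ, ∃! t', t' ∈ Γt ∧ TripleGamma.HConj t t')
    (X Y : Type*) [MulAction (G × H) X] [MulAction (H × K) Y] [Finite X] [Finite Y]
    (hX : IsBifree G H X) (hY : IsBifree H K Y) :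
    (Nat.card (MulAction.fixedPoints (twistedDiagonal R T ρ) (BisetTensor G H K X Y)) : ℚ) =
      ∑ᶠ t ∈ Γt, (Nat.card (Subgroup.centralizer (t.S : Set H)) : ℚ)⁻¹ *
        (Nat.card (MulAction.fixedPoints (twistedDiagonal R t.S t.σ) X) : ℚ) *
        (Nat.card (MulAction.fixedPoints (twistedDiagonal t.S T t.τ) Y) : ℚ) := by
  classical
  have hfin : Finite (TripleGamma H R T ρ) := S5.finite_tripleGamma
  letI : Fintype (TripleGamma H R T ρ) := Fintype.ofFinite _
  set cX : TripleGamma H R T ρ → ℕ := fun t => Nat.card (S5.fX X t) with hcX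
  set cY : TripleGamma H R T ρ → ℕ := fun t => Nat.card (S5.fY Y t) with hcY
  set cC : TripleGamma H R T ρ → ℕ :=
    fun t => Nat.card (Subgroup.centralizer (t.S : Set H)) with hcC
  set oO : TripleGamma H R T ρ → ℕ := fun t => Nat.card (MulAction.orbit H t) with hoO
  set A : ℕ :=
    Nat.card (MulAction.fixedPoints (twistedDiagonal R T ρ) (BisetTensor G H K X Y)) with hA
  set nH : ℕ := Nat.card H with hnH
  -- Step 1 : |PP| = A * |H|
  have hPP1 : Nat.card (S5.PP H ρ X Y) = A * nH := S5.card_pp hX hY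
  -- Step 2 : |PP| = ∑ over all triples
  have hPP2 : Nat.card (S5.PP H ρ X Y) = ∑ t : TripleGamma H R T ρ, cX t * cY t := by
    have e : S5.PP H ρ X Y ≃ Σ t : TripleGamma H R T ρ, (S5.fX X t × S5.fY Y t) :=
      { toFun := fun p => ⟨p.1.1, (⟨p.1.2.1, p.2.1⟩, ⟨p.1.2.2, p.2.2⟩)⟩
        invFun := fun q => ⟨(q.1, q.2.1.1, q.2.2.1), q.2.1.2, q.2.2.2⟩
        left_inv := fun p => rfl
        right_inv := fun q => rfl }
    letI : ∀ t : TripleGamma H R T ρ, Fintype (S5.fX X t) := fun t => Fintype.ofFinite _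
    letI : ∀ t : TripleGamma H R T ρ, Fintype (S5.fY Y t) := fun t => Fintype.ofFinite _
    rw [Nat.card_congr e, Nat.card_eq_fintype_card, Fintype.card_sigma]
    refine Finset.sum_congr rfl fun t _ => ?_
    rw [Fintype.card_prod, hcX, hcY]
    simp [Nat.card_eq_fintype_card]
  -- the representative map
  set θ : TripleGamma H R T ρ → TripleGamma H R T ρ := fun t => (hΓ t).choose with hθ
  have hθmem : ∀ t, θ t ∈ Γt := fun t => (hΓ t).choose_spec.1.1
  have hθconj : ∀ t, TripleGamma.HConj t (θ t) := fun t => (hΓ t).choose_spec.1.2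
  have hθuniq : ∀ t t', t' ∈ Γt → TripleGamma.HConj t t' → θ t = t' :=
    fun t t' h1 h2 => ((hΓ t).choose_spec.2 t' ⟨h1, h2⟩).symm
  set Γfin : Finset (TripleGamma H R T ρ) := Finset.univ.filter (fun t => t ∈ Γt) with hΓfin
  have hΓcoe : Γt = ↑Γfin := by
    ext t
    simp [hΓfin]
  -- Step 3 : group the sum by representatives
  have hgroup : (∑ t : TripleGamma H R T ρ, cX t * cY t)
      = ∑ t' ∈ Γfin, oO t' * (cX t' * cY t') := by
    rw [← Finset.sum_fiberwise_of_maps_to (g := θ) (t := Γfin)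
      (fun t _ => by simp [hΓfin, hθmem t])]
    refine Finset.sum_congr rfl fun t' ht' => ?_
    have ht'Γ : t' ∈ Γt := by simpa [hΓfin] using ht'
    have hfiber_iff : ∀ t, θ t = t' ↔ t ∈ MulAction.orbit H t' := by
      intro t
      constructor
      · intro h
        rw [← h]
        exact (S5.hconj_iff t (θ t)).1 (hθconj t)
      · intro h
        exact hθuniq t t' ht'Γ ((S5.hconj_iff t t').2 h)
    have hconst : ∀ t ∈ Finset.univ.filter (fun t => θ t = t'), cX t * cY t = cX t' * cY t' := by
      intro t ht
      have : t ∈ MulAction.orbit H t' := (hfiber_iff t).1 (by simpa using ht)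
      obtain ⟨h, rfl⟩ := MulAction.mem_orbit_iff.1 this
      rw [hcX, hcY]
      simp only [S5.card_fX_smul, S5.card_fY_smul]
    rw [Finset.sum_congr rfl hconst, Finset.sum_const, smul_eq_mul]
    congr 1
    rw [hoO, ← Fintype.card_subtype, ← Nat.card_eq_fintype_card]
    exact Nat.card_congr (Equiv.subtypeEquivRight hfiber_iff)
  -- Step 4 : orbit-stabilizer
  have horb : ∀ t' : TripleGamma H R T ρ, oO t' * cC t' = nH := by
    intro t'
    have h2 := Nat.card_congr (MulAction.orbitProdStabilizerEquivGroup H t')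
    rw [Nat.card_prod, S5.stabilizer_eq_centralizer t'] at h2
    exact h2
  -- Step 5 : put everything together over ℚ
  have hcast : (A : ℚ) * nH = ∑ t' ∈ Γfin, (oO t' : ℚ) * ((cX t' : ℚ) * (cY t' : ℚ)) := by
    have h0 : ((A * nH : ℕ) : ℚ) = ((∑ t' ∈ Γfin, oO t' * (cX t' * cY t') : ℕ) : ℚ) := by
      rw [← hPP1, hPP2, hgroup]
    push_cast at h0
    exact h0
  have hnH0 : (nH : ℚ) ≠ 0 := by
    rw [hnH]
    exact_mod_cast Nat.card_pos.ne'
  rw [hΓcoe, finsum_mem_coe_finset]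
  have hre : ∀ t' ∈ Γfin,
      (Nat.card (Subgroup.centralizer ((t' : TripleGamma H R T ρ).S : Set H)) : ℚ)⁻¹ *
        (Nat.card (MulAction.fixedPoints (twistedDiagonal R t'.S t'.σ) X) : ℚ) *
        (Nat.card (MulAction.fixedPoints (twistedDiagonal t'.S T t'.τ) Y) : ℚ)
      = (cC t' : ℚ)⁻¹ * (cX t' : ℚ) * (cY t' : ℚ) := fun t' _ => rfl
  rw [Finset.sum_congr rfl hre]
  refine mul_right_cancel₀ hnH0 ?_
  rw [hcast, Finset.sum_mul]
  refine Finset.sum_congr rfl fun t' ht' => ?_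
  have h1 : (oO t' : ℚ) * (cC t' : ℚ) = (nH : ℚ) := by exact_mod_cast congrArg Nat.cast (horb t')
  have hc0 : (cC t' : ℚ) ≠ 0 := by
    rw [hcC]
    exact_mod_cast Nat.card_pos.ne'
  rw [← h1]
  field_simp
end
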